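/- arXiv:cs/9904002 — 2 statements merged into one kernel-verified Lean document; each statement's English description precedes it below -/
import Mathlib

section
/- Let c_1,…,c_n be vectors in a real inner product space and let λ_1,…,λ_n be real numbers with Σ_i λ_i = 0. Then Σ_{i,j} λ_i λ_j ‖c_i − c_j‖ ≤ 0. In other words, the Euclidean distance is a kernel of negative type. -/
open scoped BigOperators
open Finset MeasureTheory Set

/-- Powers of a coordinate Gram kernel are positive semidefinite. -/
lemma aux_pd_pow {n d k : ℕ} (v : Fin n → Fin d → ℝ) (μ : Fin n → ℝ) :
    0 ≤ ∑ i, ∑ j, μ i * μ j * (∑ m, v i m * v j m) ^ k := by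
  have h1 : ∀ i j : Fin n, (∑ m, v i m * v j m) ^ k
      = ∑ p : Fin k → Fin d, (∏ t, v i (p t)) * (∏ t, v j (p t)) := by
    intro i j
    calc (∑ m, v i m * v j m) ^ k
        = ∏ _t : Fin k, ∑ m, v i m * v j m := by
          rw [prod_const, card_univ, Fintype.card_fin]
      _ = ∑ p ∈ Fintype.piFinset (fun _ : Fin k => (univ : Finset (Fin d))),
            ∏ t, v i (p t) * v j (p t) := prod_univ_sum _ _
      _ = ∑ p : Fin k → Fin d, (∏ t, v i (p t)) * (∏ t, v j (p t)) := by
          rw [Fintype.piFinset_univ]; exact Finset.sum_congr rfl fun p _ => prod_mul_distrib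
  calc ∑ i, ∑ j, μ i * μ j * (∑ m, v i m * v j m) ^ k
      = ∑ p : Fin k → Fin d, (∑ i, μ i * ∏ t, v i (p t)) ^ 2 := by
        simp_rw [h1, Finset.mul_sum]
        calc ∑ i, ∑ j, ∑ p : Fin k → Fin d, μ i * μ j * ((∏ t, v i (p t)) * ∏ t, v j (p t))
            = ∑ i, ∑ p : Fin k → Fin d, ∑ j, μ i * μ j * ((∏ t, v i (p t)) * ∏ t, v j (p t)) :=
              Finset.sum_congr rfl fun i _ => Finset.sum_comm
          _ = ∑ p : Fin k → Fin d, ∑ i, ∑ j, μ i * μ j * ((∏ t, v i (p t)) * ∏ t, v j (p t)) :=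
              Finset.sum_comm
          _ = ∑ p : Fin k → Fin d, (∑ i, μ i * ∏ t, v i (p t)) ^ 2 := by
              refine Finset.sum_congr rfl fun p _ => ?_
              rw [sq, Finset.sum_mul_sum]
              exact Finset.sum_congr rfl fun i _ => Finset.sum_congr rfl fun j _ => by ring
    _ ≥ 0 := Finset.sum_nonneg fun p _ => sq_nonneg _

/-- Gram coordinates for finitely many vectors. -/
lemma aux_coords {E : Type*} [NormedAddCommGroup E] [InnerProductSpace ℝ E]
    {n : ℕ} (c : Fin n → E) :
    ∃ d : ℕ, ∃ v : Fin n → Fin d → ℝ,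
      ∀ i j, (inner ℝ (c i) (c j) : ℝ) = ∑ m, v i m * v j m := by
  set F := Submodule.span ℝ (Set.range c) with hF
  haveI : FiniteDimensional ℝ F := FiniteDimensional.span_of_finite ℝ (Set.finite_range c)
  set b := stdOrthonormalBasis ℝ F with hb
  set c' : Fin n → F := fun i => ⟨c i, Submodule.subset_span (Set.mem_range_self i)⟩ with hc'
  refine ⟨_, fun i m => (inner ℝ (c' i) (b m) : ℝ), fun i j => ?_⟩
  have h := b.sum_inner_mul_inner (c' i) (c' j)
  have h2 : (inner ℝ (c' i) (c' j) : ℝ) = (inner ℝ (c i) (c j) : ℝ) := rfl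
  rw [← h2, ← h]
  exact Finset.sum_congr rfl fun m _ => by rw [real_inner_comm (c' j) (b m)]

/-- The Gaussian kernel is positive semidefinite. -/
lemma aux_gaussian_pd {E : Type*} [NormedAddCommGroup E] [InnerProductSpace ℝ E]
    {n : ℕ} (c : Fin n → E) (μ : Fin n → ℝ) (s : ℝ) (hs : 0 ≤ s) :
    0 ≤ ∑ i, ∑ j, μ i * μ j * Real.exp (-(s * ‖c i - c j‖ ^ 2)) := by
  obtain ⟨d, v, hv⟩ := aux_coords c
  set ν : Fin n → ℝ := fun i => μ i * Real.exp (-(s * ‖c i‖ ^ 2)) with hν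
  have key : ∀ i j, μ i * μ j * Real.exp (-(s * ‖c i - c j‖ ^ 2))
      = ν i * ν j * Real.exp (2 * s * inner ℝ (c i) (c j)) := by
    intro i j
    have hnorm : ‖c i - c j‖ ^ 2 = ‖c i‖ ^ 2 - 2 * inner ℝ (c i) (c j) + ‖c j‖ ^ 2 :=
      norm_sub_sq_real (c i) (c j)
    rw [hν, hnorm]
    have h3 : -(s * (‖c i‖ ^ 2 - 2 * inner ℝ (c i) (c j) + ‖c j‖ ^ 2))
        = -(s * ‖c i‖ ^ 2) + -(s * ‖c j‖ ^ 2) + 2 * s * inner ℝ (c i) (c j) := by ring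
    rw [h3, Real.exp_add, Real.exp_add]
    ring
  simp_rw [key]
  have hexp : ∀ x : ℝ, Real.exp x = ∑' k : ℕ, x ^ k / k.factorial := by
    intro x
    rw [Real.exp_eq_exp_ℝ, NormedSpace.exp_eq_tsum_div]
  have hsum : ∀ (a : ℝ) (x : ℝ), Summable fun k : ℕ => a * (x ^ k / k.factorial) :=
    fun a x => (Real.summable_pow_div_factorial x).mul_left a
  calc ∑ i, ∑ j, ν i * ν j * Real.exp (2 * s * inner ℝ (c i) (c j))
      = ∑ i, ∑ j, ∑' k : ℕ, ν i * ν j * ((2 * s * inner ℝ (c i) (c j)) ^ k / k.factorial) := by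
        refine Finset.sum_congr rfl fun i _ => Finset.sum_congr rfl fun j _ => ?_
        rw [hexp, ← tsum_mul_left]
    _ = ∑' k : ℕ, ∑ i, ∑ j, ν i * ν j * ((2 * s * inner ℝ (c i) (c j)) ^ k / k.factorial) := by
        rw [eq_comm]
        calc ∑' k : ℕ, ∑ i, ∑ j, ν i * ν j * ((2 * s * inner ℝ (c i) (c j)) ^ k / k.factorial)
            = ∑ i, ∑' k : ℕ, ∑ j, ν i * ν j * ((2 * s * inner ℝ (c i) (c j)) ^ k / k.factorial) :=
              Summable.tsum_finsetSum fun i _ => summable_sum fun j _ => hsum _ _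
          _ = ∑ i, ∑ j, ∑' k : ℕ, ν i * ν j * ((2 * s * inner ℝ (c i) (c j)) ^ k / k.factorial) :=
              Finset.sum_congr rfl fun i _ => Summable.tsum_finsetSum fun j _ => hsum _ _
    _ ≥ 0 := by
        refine tsum_nonneg fun k => ?_
        have : ∀ i j : Fin n, ν i * ν j * ((2 * s * inner ℝ (c i) (c j)) ^ k / k.factorial)
            = ((2 * s) ^ k / k.factorial) * (ν i * ν j * (∑ m, v i m * v j m) ^ k) := by
          intro i j
          rw [mul_pow, hv i j]
          ring
        simp_rw [this, ← Finset.mul_sum]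
        exact mul_nonneg (by positivity) (aux_pd_pow v ν)

noncomputable def auxG (a : ℝ) (t : ℝ) : ℝ := (1 - Real.exp (-(a * t ^ 2))) / t ^ 2

lemma auxG_nonneg {a : ℝ} (ha : 0 ≤ a) (t : ℝ) : 0 ≤ auxG a t := by
  apply div_nonneg _ (sq_nonneg t)
  have : Real.exp (-(a * t ^ 2)) ≤ 1 := Real.exp_le_one_iff.mpr (neg_nonpos.mpr (by positivity))
  linarith

lemma auxG_meas (a : ℝ) : Measurable (auxG a) := by
  unfold auxG; measurability

lemma auxG_integrable {a : ℝ} (ha : 0 ≤ a) : IntegrableOn (auxG a) (Ioi 0) := by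
  have h1 : IntegrableOn (auxG a) (Ioc 0 1) := by
    refine Integrable.mono (g := fun _ => a) ?_ (auxG_meas a).aestronglyMeasurable ?_
    · exact (integrableOn_const_iff (C := a)).mpr (Or.inr (by simp))
    · refine (ae_restrict_iff' measurableSet_Ioc).mpr (Filter.Eventually.of_forall ?_)
      intro t ht
      have ht0 : 0 < t := ht.1
      rw [Real.norm_eq_abs, Real.norm_eq_abs, abs_of_nonneg (auxG_nonneg ha t)]
      have hle : 1 - Real.exp (-(a * t ^ 2)) ≤ a * t ^ 2 := by
        have := Real.add_one_le_exp (-(a * t ^ 2)); linarith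
      have : auxG a t ≤ a := by
        rw [auxG, div_le_iff₀ (by positivity)]
        exact hle.trans (le_of_eq rfl)
      exact this.trans (le_abs_self a)
  have h2 : IntegrableOn (auxG a) (Ioi 1) := by
    refine Integrable.mono (g := fun t => t ^ (-2 : ℝ)) ?_ (auxG_meas a).aestronglyMeasurable ?_
    · exact integrableOn_Ioi_rpow_of_lt (by norm_num) one_pos
    · refine (ae_restrict_iff' measurableSet_Ioi).mpr (Filter.Eventually.of_forall ?_)
      intro t ht
      have ht1 : (1 : ℝ) < t := ht
      have ht0 : 0 < t := lt_trans one_pos ht1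
      rw [Real.norm_eq_abs, Real.norm_eq_abs, abs_of_nonneg (auxG_nonneg ha t),
        abs_of_nonneg (Real.rpow_nonneg ht0.le _)]
      have hrw : t ^ (-2 : ℝ) = 1 / t ^ 2 := by
        rw [Real.rpow_neg ht0.le, one_div]
        norm_num [Real.rpow_natCast]
      rw [hrw, auxG]
      apply div_le_div_of_nonneg_right ?_ (by positivity)
      · have : 0 < Real.exp (-(a * t ^ 2)) := Real.exp_pos _
        linarith
  have := h1.union h2
  rwa [Ioc_union_Ioi_eq_Ioi zero_le_one] at this

noncomputable def auxC : ℝ := ∫ t in Ioi (0:ℝ), auxG 1 t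

lemma auxC_pos : 0 < auxC := by
  rw [auxC, setIntegral_pos_iff_support_of_nonneg_ae _ (auxG_integrable zero_le_one)]
  · have hsub : Ioi (0:ℝ) ⊆ Function.support (auxG 1) ∩ Ioi 0 := by
      intro t ht
      refine ⟨?_, ht⟩
      have ht0 : (0:ℝ) < t := ht
      have hlt : Real.exp (-(1 * t ^ 2)) < 1 := Real.exp_lt_one_iff.mpr (by nlinarith)
      simp only [Function.mem_support, auxG]
      exact ne_of_gt (div_pos (by linarith) (by positivity))
    calc (0:ENNReal) < volume (Ioi (0:ℝ)) := by simp
      _ ≤ _ := measure_mono hsub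
  · refine (ae_restrict_iff' measurableSet_Ioi).mpr (Filter.Eventually.of_forall ?_)
    exact fun t _ => auxG_nonneg zero_le_one t

lemma aux_norm_rep {r : ℝ} (hr : 0 ≤ r) :
    r * auxC = ∫ t in Ioi (0:ℝ), auxG (r ^ 2) t := by
  rcases eq_or_lt_of_le hr with h | h
  · rw [← h]
    have : EqOn (auxG ((0:ℝ) ^ 2)) (fun _ => (0:ℝ)) (Ioi 0) := by
      intro t _
      simp [auxG]
    rw [setIntegral_congr_fun measurableSet_Ioi this]
    simp
  · have key : EqOn (auxG (r ^ 2)) (fun t => r ^ 2 * auxG 1 (r * t)) (Ioi 0) := by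
      intro t ht
      have ht0 : (0:ℝ) < t := ht
      simp only [auxG, mul_pow, one_mul]
      field_simp
    rw [setIntegral_congr_fun measurableSet_Ioi key, integral_const_mul,
      integral_comp_mul_left_Ioi (auxG 1) 0 h, mul_zero, smul_eq_mul, ← auxC]
    field_simp

/-- The Euclidean distance is a kernel of negative type: for vectors `c_1,…,c_n` in a
real inner product space and reals `λ_1,…,λ_n` with `Σ_i λ_i = 0`, one has
`Σ_{i,j} λ_i λ_j ‖c_i − c_j‖ ≤ 0`. -/
theorem stmt8 {E : Type*} [NormedAddCommGroup E] [InnerProductSpace ℝ E]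
    {n : ℕ} (c : Fin n → E) (lam : Fin n → ℝ) (hlam : ∑ i, lam i = 0) :
    ∑ i, ∑ j, lam i * lam j * ‖c i - c j‖ ≤ 0 := by
  have hC := auxC_pos
  rw [← mul_le_mul_iff_of_pos_right hC, zero_mul]
  have hInt : ∀ p : Fin n × Fin n, IntegrableOn
      (fun t => lam p.1 * lam p.2 * auxG (‖c p.1 - c p.2‖ ^ 2) t) (Ioi 0) :=
    fun p => (auxG_integrable (sq_nonneg _)).const_mul _
  calc (∑ i, ∑ j, lam i * lam j * ‖c i - c j‖) * auxC
      = ∑ i, ∑ j, lam i * lam j * (‖c i - c j‖ * auxC) := by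
        rw [Finset.sum_mul]
        exact Finset.sum_congr rfl fun i _ => by
          rw [Finset.sum_mul]
          exact Finset.sum_congr rfl fun j _ => by ring
    _ = ∑ p : Fin n × Fin n, lam p.1 * lam p.2 *
          ∫ t in Ioi (0:ℝ), auxG (‖c p.1 - c p.2‖ ^ 2) t := by
        rw [Fintype.sum_prod_type]
        exact Finset.sum_congr rfl fun i _ => Finset.sum_congr rfl fun j _ => by
          rw [aux_norm_rep (norm_nonneg _)]
    _ = ∫ t in Ioi (0:ℝ), ∑ p : Fin n × Fin n,
          lam p.1 * lam p.2 * auxG (‖c p.1 - c p.2‖ ^ 2) t := by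
        rw [integral_finset_sum univ fun p _ => hInt p]
        exact Finset.sum_congr rfl fun p _ => (integral_const_mul _ _).symm
    _ ≤ 0 := by
        refine setIntegral_nonpos measurableSet_Ioi fun t ht => ?_
        have ht0 : (0:ℝ) < t := ht
        have hg := aux_gaussian_pd c lam (t ^ 2) (sq_nonneg t)
        have hzero : ∑ i, ∑ j, lam i * lam j = 0 := by
          rw [← Finset.sum_mul_sum, hlam, zero_mul]
        calc ∑ p : Fin n × Fin n, lam p.1 * lam p.2 * auxG (‖c p.1 - c p.2‖ ^ 2) t
            = ∑ i, ∑ j, (lam i * lam j / t ^ 2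
                - lam i * lam j * Real.exp (-(t ^ 2 * ‖c i - c j‖ ^ 2)) / t ^ 2) := by
              rw [Fintype.sum_prod_type]
              refine Finset.sum_congr rfl fun i _ => Finset.sum_congr rfl fun j _ => ?_
              rw [auxG, mul_comm (‖c i - c j‖ ^ 2) (t ^ 2)]
              ring
          _ = (∑ i, ∑ j, lam i * lam j) / t ^ 2
                - (∑ i, ∑ j, lam i * lam j * Real.exp (-(t ^ 2 * ‖c i - c j‖ ^ 2))) / t ^ 2 := by
              rw [Finset.sum_div, Finset.sum_div, ← Finset.sum_sub_distrib]
              refine Finset.sum_congr rfl fun i _ => ?_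
              rw [Finset.sum_div, Finset.sum_div, ← Finset.sum_sub_distrib]
          _ ≤ 0 := by
              rw [hzero, zero_div, zero_sub, neg_nonpos]
              positivity
end

section
/- Let c_1,…,c_n be points of a real Hilbert space H. Then there exist vectors v_1,…,v_n in some real Hilbert space (one may take ℝⁿ) such that ‖v_i − v_j‖² = ‖c_i − c_j‖ for all i, j. That is, the metric transform of a finite subset of Euclidean (Hilbert) space by the function F(t) = √t embeds isometrically into a Hilbert space. -/
open MeasureTheory Real Finset Matrix
open scoped MatrixOrder

local notation "⟪" x ", " y "⟫" => @inner ℝ _ _ x y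

noncomputable section SqrtEmbedAux

/-- Step function indicator. -/
def sqrtEmbedChi (p r : ℝ) : ℝ := if r ≤ p then 1 else 0

lemma sqrtEmbed_sq_chi (p q r : ℝ) :
    (sqrtEmbedChi p r - sqrtEmbedChi q r) ^ 2
      = Set.indicator (Set.Ioc (min p q) (max p q)) (fun _ => (1:ℝ)) r := by
  unfold sqrtEmbedChi
  rw [Set.indicator_apply]
  simp only [Set.mem_Ioc]
  by_cases h1 : r ≤ p <;> by_cases h2 : r ≤ q
  · rw [if_pos h1, if_pos h2, if_neg (fun h => absurd h.1 (not_lt.2 (le_min h1 h2)))]; norm_num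
  · rw [if_pos h1, if_neg h2,
      if_pos ⟨min_lt_iff.2 (Or.inr (not_le.1 h2)), le_max_iff.2 (Or.inl h1)⟩]; norm_num
  · rw [if_neg h1, if_pos h2,
      if_pos ⟨min_lt_iff.2 (Or.inl (not_le.1 h1)), le_max_iff.2 (Or.inr h2)⟩]; norm_num
  · rw [if_neg h1, if_neg h2,
      if_neg (fun h => absurd h.2 (not_le.2 (max_lt (not_le.1 h1) (not_le.1 h2))))]; norm_num

lemma sqrtEmbed_integrable_sq_chi (p q : ℝ) :
    Integrable (fun r => (sqrtEmbedChi p r - sqrtEmbedChi q r) ^ 2) := by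
  simp only [sqrtEmbed_sq_chi]
  rw [integrable_indicator_iff measurableSet_Ioc]
  exact integrableOn_const measure_Ioc_lt_top.ne

lemma sqrtEmbed_integral_sq_chi (p q : ℝ) :
    ∫ r, (sqrtEmbedChi p r - sqrtEmbedChi q r) ^ 2 = |p - q| := by
  simp only [sqrtEmbed_sq_chi]
  rw [integral_indicator measurableSet_Ioc]
  simp [Real.volume_Ioc, ENNReal.toReal_ofReal (sub_nonneg.2 (min_le_max (a := p) (b := q))),
    max_sub_min_eq_abs, abs_sub_comm]

lemma sqrtEmbed_sum_sq_expand {n : ℕ} (x a : Fin n → ℝ) (hx : ∑ i, x i = 0) :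
    ∑ i, ∑ j, x i * x j * (a i - a j) ^ 2 = -2 * (∑ i, x i * a i) ^ 2 := by
  have h : ∀ i j : Fin n, x i * x j * (a i - a j) ^ 2
      = (x i * a i ^ 2) * x j + x i * (x j * a j ^ 2) - (2 * (x i * a i)) * (x j * a j) := by
    intro i j; ring
  simp only [h, Finset.sum_sub_distrib, Finset.sum_add_distrib, ← Finset.mul_sum,
    ← Finset.sum_mul, hx]
  ring

/-- one-dimensional negative type inequality -/
lemma sqrtEmbed_neg1d {n : ℕ} (x s : Fin n → ℝ) (hx : ∑ i, x i = 0) :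
    ∑ i, ∑ j, x i * x j * |s i - s j| ≤ 0 := by
  have hint : ∀ i j : Fin n,
      Integrable (fun r => x i * x j * (sqrtEmbedChi (s i) r - sqrtEmbedChi (s j) r) ^ 2) :=
    fun i j => (sqrtEmbed_integrable_sq_chi (s i) (s j)).const_mul _
  have key : ∀ i j : Fin n, x i * x j * |s i - s j|
      = ∫ r, x i * x j * (sqrtEmbedChi (s i) r - sqrtEmbedChi (s j) r) ^ 2 := by
    intro i j
    rw [integral_const_mul, sqrtEmbed_integral_sq_chi]
  calc ∑ i, ∑ j, x i * x j * |s i - s j|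
      = ∫ r, ∑ i, ∑ j, x i * x j * (sqrtEmbedChi (s i) r - sqrtEmbedChi (s j) r) ^ 2 := by
        simp only [key]
        rw [integral_finset_sum _ (fun i _ => integrable_finset_sum _ (fun j _ => hint i j))]
        exact Finset.sum_congr rfl fun i _ =>
          (integral_finset_sum _ (fun j _ => hint i j)).symm
    _ = ∫ r, -2 * (∑ i, x i * sqrtEmbedChi (s i) r) ^ 2 := by
        congr 1; funext r
        exact sqrtEmbed_sum_sq_expand x (fun i => sqrtEmbedChi (s i) r) hx
    _ ≤ 0 := integral_nonpos (by
        intro r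
        simp only [Pi.zero_apply]
        nlinarith [sq_nonneg (∑ i, x i * sqrtEmbedChi (s i) r)])

end SqrtEmbedAux

noncomputable section SqrtEmbedGauss

lemma sqrtEmbed_integrable_gaussE (n : ℕ) :
    Integrable (fun u : EuclideanSpace ℝ (Fin n) => rexp (-(1/2) * ‖u‖ ^ 2)) := by
  have h := (GaussianFourier.integrable_cexp_neg_mul_sq_norm_add_of_euclideanSpace
    (b := (1/2 : ℂ)) (by norm_num) 0 (0 : EuclideanSpace ℝ (Fin n))).norm
  refine h.congr (Filter.Eventually.of_forall fun u => ?_)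
  simp [Complex.norm_exp, ← Complex.ofReal_pow]

lemma sqrtEmbed_integrable_weight {n : ℕ} (z : EuclideanSpace ℝ (Fin n)) :
    Integrable (fun u : EuclideanSpace ℝ (Fin n) => rexp (-‖u‖ ^ 2) * |⟪u, z⟫|) := by
  refine Integrable.mono' ((sqrtEmbed_integrable_gaussE n).const_mul ‖z‖)
    (((Real.continuous_exp.comp (continuous_norm.pow 2).neg).mul
      ((continuous_id.inner continuous_const)).abs).aestronglyMeasurable)
    (Filter.Eventually.of_forall fun u => ?_)
  · have h1 : |⟪u, z⟫| ≤ ‖u‖ * ‖z‖ := abs_real_inner_le_norm u z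
    have h2 : ‖u‖ * rexp (-‖u‖ ^ 2) ≤ rexp (-(1/2) * ‖u‖ ^ 2) := by
      have e1 : rexp (-‖u‖ ^ 2) = rexp (-(1/2) * ‖u‖ ^ 2) * rexp (-(1/2) * ‖u‖ ^ 2) := by
        rw [← Real.exp_add]; ring_nf
      have h3 := Real.add_one_le_exp ((1/2) * ‖u‖ ^ 2)
      have h4 : ‖u‖ ≤ rexp ((1/2) * ‖u‖ ^ 2) := by nlinarith [norm_nonneg u, sq_nonneg (‖u‖ - 1)]
      have e2 : ‖u‖ * rexp (-(1/2) * ‖u‖ ^ 2) ≤ 1 :=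
        calc ‖u‖ * rexp (-(1/2) * ‖u‖ ^ 2)
            ≤ rexp ((1/2) * ‖u‖ ^ 2) * rexp (-(1/2) * ‖u‖ ^ 2) :=
              mul_le_mul_of_nonneg_right h4 (Real.exp_nonneg _)
          _ = 1 := by rw [← Real.exp_add]; ring_nf; exact Real.exp_zero
      calc ‖u‖ * rexp (-‖u‖ ^ 2)
          = (‖u‖ * rexp (-(1/2) * ‖u‖ ^ 2)) * rexp (-(1/2) * ‖u‖ ^ 2) := by rw [e1]; ring
        _ ≤ 1 * rexp (-(1/2) * ‖u‖ ^ 2) := mul_le_mul_of_nonneg_right e2 (Real.exp_nonneg _)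
        _ = rexp (-(1/2) * ‖u‖ ^ 2) := one_mul _
    rw [Real.norm_eq_abs, abs_mul, abs_of_nonneg (Real.exp_nonneg _), abs_abs]
    calc rexp (-‖u‖ ^ 2) * |⟪u, z⟫| ≤ rexp (-‖u‖ ^ 2) * (‖u‖ * ‖z‖) :=
          mul_le_mul_of_nonneg_left h1 (Real.exp_nonneg _)
      _ = ‖z‖ * (‖u‖ * rexp (-‖u‖ ^ 2)) := by ring
      _ ≤ ‖z‖ * rexp (-(1/2) * ‖u‖ ^ 2) := mul_le_mul_of_nonneg_left h2 (norm_nonneg _)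

/-- the weighted first absolute moment functional -/
def sqrtEmbedTheta (n : ℕ) (z : EuclideanSpace ℝ (Fin n)) : ℝ :=
  ∫ u : EuclideanSpace ℝ (Fin n), rexp (-‖u‖ ^ 2) * |⟪u, z⟫|

lemma sqrtEmbedTheta_smul {n : ℕ} (t : ℝ) (ht : 0 ≤ t) (z : EuclideanSpace ℝ (Fin n)) :
    sqrtEmbedTheta n (t • z) = t * sqrtEmbedTheta n z := by
  unfold sqrtEmbedTheta
  rw [← integral_const_mul]
  congr 1; funext u
  rw [real_inner_smul_right, abs_mul, abs_of_nonneg ht]; ring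

lemma sqrtEmbedTheta_iso {n : ℕ}
    (T : EuclideanSpace ℝ (Fin n) ≃ₗᵢ[ℝ] EuclideanSpace ℝ (Fin n))
    (z : EuclideanSpace ℝ (Fin n)) :
    sqrtEmbedTheta n (T z) = sqrtEmbedTheta n z := by
  unfold sqrtEmbedTheta
  rw [← T.measurePreserving.integral_comp T.toHomeomorph.measurableEmbedding
    (fun u => rexp (-‖u‖ ^ 2) * |⟪u, T z⟫|)]
  congr 1; funext u
  rw [LinearIsometryEquiv.norm_map, LinearIsometryEquiv.inner_map_map]

lemma sqrtEmbedTheta_norm {n : ℕ} {e : EuclideanSpace ℝ (Fin n)} (he : ‖e‖ = 1)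
    (z : EuclideanSpace ℝ (Fin n)) :
    sqrtEmbedTheta n z = sqrtEmbedTheta n e * ‖z‖ := by
  rcases eq_or_ne z 0 with rfl | hz
  · simp [sqrtEmbedTheta]
  · have hw : ‖(‖z‖ • e)‖ = ‖z‖ := by
      rw [norm_smul, he, Real.norm_eq_abs, abs_of_nonneg (norm_nonneg z), mul_one]
    have href : Submodule.reflection (ℝ ∙ (z - ‖z‖ • e))ᗮ z = ‖z‖ • e := Submodule.reflection_sub hw.symm
    calc sqrtEmbedTheta n z = sqrtEmbedTheta n (Submodule.reflection (ℝ ∙ (z - ‖z‖ • e))ᗮ z) :=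
          (sqrtEmbedTheta_iso _ z).symm
      _ = sqrtEmbedTheta n (‖z‖ • e) := by rw [href]
      _ = ‖z‖ * sqrtEmbedTheta n e := sqrtEmbedTheta_smul _ (norm_nonneg z) e
      _ = _ := mul_comm _ _

lemma sqrtEmbedTheta_pos {n : ℕ} (hn : 0 < n) :
    0 < sqrtEmbedTheta n (EuclideanSpace.single (⟨0, hn⟩ : Fin n) (1:ℝ)) := by
  set e := EuclideanSpace.single (⟨0, hn⟩ : Fin n) (1:ℝ) with he_def
  have he1 : ‖e‖ = 1 := by simp [he_def, EuclideanSpace.norm_single]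
  unfold sqrtEmbedTheta
  rw [integral_pos_iff_support_of_nonneg (fun u => by positivity)
    (sqrtEmbed_integrable_weight e)]
  refine lt_of_lt_of_le (Metric.measure_ball_pos volume e one_pos) (measure_mono ?_)
  intro u hu
  have hmem : ‖u - e‖ < 1 := by rwa [Metric.mem_ball, dist_eq_norm] at hu
  have h1 : |⟪u - e, e⟫| ≤ ‖u - e‖ * ‖e‖ := abs_real_inner_le_norm _ _
  have he2 : ⟪e, e⟫ = 1 := by
    rw [real_inner_self_eq_norm_sq, he1]; norm_num
  have hne : ⟪u, e⟫ ≠ 0 := by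
    intro h0
    rw [inner_sub_left, he2, h0, he1, mul_one] at h1
    rw [zero_sub, abs_neg, abs_one] at h1
    linarith
  exact Function.mem_support.2 (mul_ne_zero (Real.exp_ne_zero _) (abs_ne_zero.2 hne))

/-- negative type inequality for Euclidean distances -/
lemma sqrtEmbed_negE {n : ℕ} (hn : 0 < n) (a : Fin n → EuclideanSpace ℝ (Fin n))
    (x : Fin n → ℝ) (hx : ∑ i, x i = 0) :
    ∑ i, ∑ j, x i * x j * ‖a i - a j‖ ≤ 0 := by
  set e := EuclideanSpace.single (⟨0, hn⟩ : Fin n) (1:ℝ) with he_def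
  have he1 : ‖e‖ = 1 := by simp [he_def, EuclideanSpace.norm_single]
  set K := sqrtEmbedTheta n e with hK_def
  have hK : 0 < K := sqrtEmbedTheta_pos hn
  have habs : ∀ z : EuclideanSpace ℝ (Fin n),
      (∫ u : EuclideanSpace ℝ (Fin n), rexp (-‖u‖ ^ 2) * |⟪u, z⟫|) = K * ‖z‖ :=
    fun z => sqrtEmbedTheta_norm he1 z
  have hs : ∑ i, ∑ j, x i * x j * (K * ‖a i - a j‖) ≤ 0 := by
    calc ∑ i, ∑ j, x i * x j * (K * ‖a i - a j‖)
        = ∑ i, ∑ j, ∫ u : EuclideanSpace ℝ (Fin n),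
            x i * x j * (rexp (-‖u‖ ^ 2) * |⟪u, a i - a j⟫|) := by
          refine Finset.sum_congr rfl fun i _ => Finset.sum_congr rfl fun j _ => ?_
          rw [integral_const_mul, habs (a i - a j)]
      _ = ∫ u : EuclideanSpace ℝ (Fin n), ∑ i, ∑ j,
            x i * x j * (rexp (-‖u‖ ^ 2) * |⟪u, a i - a j⟫|) := by
          rw [integral_finset_sum _ (fun i _ => integrable_finset_sum _ (fun j _ =>
            (sqrtEmbed_integrable_weight (a i - a j)).const_mul _))]
          exact Finset.sum_congr rfl fun i _ =>
            (integral_finset_sum _ (fun j _ =>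
              (sqrtEmbed_integrable_weight (a i - a j)).const_mul _)).symm
      _ ≤ 0 := by
          refine integral_nonpos ?_
          intro u
          simp only [Pi.zero_apply]
          have hpt : ∑ i, ∑ j, x i * x j * (rexp (-‖u‖ ^ 2) * |⟪u, a i - a j⟫|)
              = rexp (-‖u‖ ^ 2) * ∑ i, ∑ j, x i * x j * |⟪u, a i⟫ - ⟪u, a j⟫| := by
            rw [Finset.mul_sum]
            refine Finset.sum_congr rfl fun i _ => ?_
            rw [Finset.mul_sum]
            refine Finset.sum_congr rfl fun j _ => ?_
            rw [inner_sub_right]; ring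
          rw [hpt]
          exact mul_nonpos_iff.2 (Or.inl ⟨(Real.exp_pos _).le,
            sqrtEmbed_neg1d x (fun i => ⟪u, a i⟫) hx⟩)
  have hfactor : ∀ i j : Fin n, x i * x j * (K * ‖a i - a j‖)
      = K * (x i * x j * ‖a i - a j‖) := fun i j => by ring
  simp only [hfactor, ← Finset.mul_sum] at hs
  nlinarith

end SqrtEmbedGauss


noncomputable section SqrtEmbedModel

/-- finitely many points of a real inner product space can be realized inside
`EuclideanSpace ℝ (Fin n)` with the same pairwise distances. -/
lemma sqrtEmbed_model {H : Type*} [NormedAddCommGroup H] [InnerProductSpace ℝ H]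
    {n : ℕ} (c : Fin n → H) :
    ∃ a : Fin n → EuclideanSpace ℝ (Fin n), ∀ i j, ‖a i - a j‖ = ‖c i - c j‖ := by
  classical
  set S := Submodule.span ℝ (Set.range c) with hS
  haveI : FiniteDimensional ℝ S := FiniteDimensional.span_of_finite ℝ (Set.finite_range c)
  have hm : Module.finrank ℝ S ≤ n := by
    have h := finrank_range_le_card (R := ℝ) c
    simpa [Set.finrank] using h
  set b := stdOrthonormalBasis ℝ S with hb
  set f : Fin (Module.finrank ℝ S) → EuclideanSpace ℝ (Fin n) :=
    fun k => EuclideanSpace.single (Fin.castLE hm k) 1 with hf_def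
  have hf : Orthonormal ℝ f :=
    EuclideanSpace.orthonormal_single.comp (Fin.castLE hm) (Fin.castLE_injective hm)
  set y : Fin n → S := fun i => ⟨c i, Submodule.subset_span ⟨i, rfl⟩⟩ with hy
  set A : S → EuclideanSpace ℝ (Fin n) := fun w => ∑ k, b.repr w k • f k with hA_def
  have hAinner : ∀ w w' : S, ⟪A w, A w'⟫ = ⟪w, w'⟫ := by
    intro w w'
    rw [hA_def]
    rw [hf.inner_sum]
    have h4 := b.repr.inner_map_map w w'
    rw [PiLp.inner_apply] at h4
    simpa [RCLike.inner_apply, mul_comm] using h4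
  have hAsub : ∀ w w' : S, A (w - w') = A w - A w' := by
    intro w w'
    simp [hA_def, map_sub, sub_smul, Finset.sum_sub_distrib]
  refine ⟨fun i => A (y i), fun i j => ?_⟩
  have hyc : ((y i - y j : S) : H) = c i - c j := by simp [hy]
  have h2 : ‖A (y i) - A (y j)‖ ^ 2 = ‖c i - c j‖ ^ 2 := by
    rw [← hAsub, ← real_inner_self_eq_norm_sq, hAinner, real_inner_self_eq_norm_sq,
      Submodule.coe_norm, hyc]
  have h3 := congrArg Real.sqrt h2
  rwa [Real.sqrt_sq (norm_nonneg _), Real.sqrt_sq (norm_nonneg _)] at h3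

end SqrtEmbedModel


section SqrtEmbedMatrix

lemma sqrtEmbed_hexp_aux {n : ℕ} (i0 : Fin n) (x : Fin n → ℝ) (d : Fin n → Fin n → ℝ)
    (hd_symm : ∀ i j, d i j = d j i) (hd_self : ∀ i, d i i = 0) :
    ∑ i, ∑ j, ((x i - (∑ k, x k) * (if i = i0 then 1 else 0))
        * (x j - (∑ k, x k) * (if j = i0 then 1 else 0)) * d i j)
      = (∑ i, ∑ j, x i * x j * d i j) - 2 * (∑ k, x k) * (∑ i, x i * d i i0) := by
  have hterm : ∀ i j : Fin n,
      (x i - (∑ k, x k) * (if i = i0 then 1 else 0))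
        * (x j - (∑ k, x k) * (if j = i0 then 1 else 0)) * d i j
      = x i * x j * d i j
        - (∑ k, x k) * ((if i = i0 then 1 else 0) * (x j * d i j))
        - (∑ k, x k) * ((if j = i0 then 1 else 0) * (x i * d i j))
        + ((∑ k, x k) * (∑ k, x k)) * ((if i = i0 then 1 else 0)
            * ((if j = i0 then 1 else 0) * d i j)) := by
    intro i j; ring
  simp only [hterm, Finset.sum_add_distrib, Finset.sum_sub_distrib, ← Finset.mul_sum,
    ite_mul, one_mul, zero_mul, Finset.sum_ite_irrel, Finset.sum_const_zero,
    Finset.sum_ite_eq', Finset.mem_univ, if_true]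
  have h1 : ∑ j, x j * d i0 j = ∑ i, x i * d i i0 :=
    Finset.sum_congr rfl fun j _ => by rw [hd_symm i0 j]
  rw [hd_self i0, h1]
  ring

lemma sqrtEmbed_hquad_aux {n : ℕ} (i0 : Fin n) (x : Fin n → ℝ) (d : Fin n → Fin n → ℝ) :
    star x ⬝ᵥ (Matrix.of fun i j => (d i i0 + d j i0 - d i j) / 2).mulVec x
      = (∑ k, x k) * (∑ i, x i * d i i0) - (∑ i, ∑ j, x i * x j * d i j) / 2 := by
  have hsx : star x = x := rfl
  rw [hsx]
  have hterm : ∀ i j : Fin n, x i * ((d i i0 + d j i0 - d i j) / 2 * x j)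
      = (1/2) * ((x i * d i i0) * x j) + (1/2) * (x i * (x j * d j i0))
        - (1/2) * (x i * (x j * d i j)) := by intro i j; ring
  simp only [dotProduct, Matrix.mulVec, Matrix.of_apply, Finset.mul_sum]
  simp only [hterm, Finset.sum_add_distrib, Finset.sum_sub_distrib, ← Finset.mul_sum,
    ← Finset.sum_mul]
  have h3 : ∑ i, x i * ∑ j, x j * d i j = ∑ i, ∑ j, x i * x j * d i j := by
    refine Finset.sum_congr rfl fun i _ => ?_
    rw [Finset.mul_sum]
    exact Finset.sum_congr rfl fun j _ => by ring
  rw [h3]; ring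

end SqrtEmbedMatrix

/-- The metric transform of a finite subset of a real Hilbert space by `F(t) = √t` embeds
isometrically into a Hilbert space: given points `c_1,…,c_n` of a real Hilbert space `H`,
there are vectors `v_1,…,v_n` in `ℝⁿ` with `‖v_i − v_j‖² = ‖c_i − c_j‖` for all `i, j`. -/
theorem stmt9 {H : Type*} [NormedAddCommGroup H] [InnerProductSpace ℝ H] [CompleteSpace H]
    {n : ℕ} (c : Fin n → H) :
    ∃ v : Fin n → EuclideanSpace ℝ (Fin n),
      ∀ i j, ‖v i - v j‖ ^ 2 = ‖c i - c j‖ := by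
  classical
  rcases Nat.eq_zero_or_pos n with rfl | hn
  · exact ⟨fun _ => 0, fun i => i.elim0⟩
  obtain ⟨a, ha⟩ := sqrtEmbed_model c
  set i0 : Fin n := ⟨0, hn⟩ with hi0
  set d : Fin n → Fin n → ℝ := fun i j => ‖c i - c j‖ with hd
  have hd_symm : ∀ i j, d i j = d j i := fun i j => by simp [hd, norm_sub_rev]
  have hd_self : ∀ i, d i i = 0 := fun i => by simp [hd]
  set M : Matrix (Fin n) (Fin n) ℝ :=
    Matrix.of (fun i j => (d i i0 + d j i0 - d i j) / 2) with hM
  have hneg : ∀ x : Fin n → ℝ, ∑ i, x i = 0 → ∑ i, ∑ j, x i * x j * d i j ≤ 0 := by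
    intro x hx
    have h := sqrtEmbed_negE hn a x hx
    refine le_trans (le_of_eq ?_) h
    exact Finset.sum_congr rfl fun i _ => Finset.sum_congr rfl fun j _ => by rw [hd, ha i j]
  have hPSD : M.PosSemidef := by
    refine Matrix.PosSemidef.of_dotProduct_mulVec_nonneg ?_ ?_
    · ext i j
      simp only [Matrix.conjTranspose_apply, star_trivial, hM, Matrix.of_apply]
      rw [hd_symm j i]; ring
    · intro x
      set z : Fin n → ℝ := fun i => x i - (∑ k, x k) * (if i = i0 then 1 else 0) with hzdef
      have hzsum : ∑ i, z i = 0 := by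
        simp only [hzdef, Finset.sum_sub_distrib, ← Finset.mul_sum]
        simp [Finset.sum_ite_eq']
      have hzq := hneg z hzsum
      simp only [hzdef] at hzq
      have he := sqrtEmbed_hexp_aux i0 x d hd_symm hd_self
      have hq := sqrtEmbed_hquad_aux i0 x d
      rw [hM, hq]
      linarith [hzq, he]
  set v : Fin n → EuclideanSpace ℝ (Fin n) :=
    fun i => (WithLp.equiv 2 (Fin n → ℝ)).symm (fun k => CFC.sqrt M i k) with hv
  have hsym := (Matrix.nonneg_iff_posSemidef.1 (CFC.sqrt_nonneg M)).1
  have hmul := CFC.sqrt_mul_sqrt_self M hPSD.nonneg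
  have hinner : ∀ i j, ⟪v i, v j⟫ = M i j := by
    intro i j
    have h1 : M i j = ∑ k, CFC.sqrt M i k * CFC.sqrt M j k := by
      conv_lhs => rw [← hmul]
      rw [Matrix.mul_apply]
      exact Finset.sum_congr rfl fun k _ => by rw [← hsym.apply k j, star_trivial]
    rw [h1]
    simp [hv, PiLp.inner_apply, RCLike.inner_apply, mul_comm]
  refine ⟨v, fun i j => ?_⟩
  have hfin : ‖v i - v j‖ ^ 2 = M i i + M j j - 2 * M i j := by
    rw [norm_sub_sq_real, ← real_inner_self_eq_norm_sq, ← real_inner_self_eq_norm_sq,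
      hinner, hinner, hinner]
    ring
  rw [hfin]
  simp only [hM, Matrix.of_apply]
  rw [hd_self i, hd_self j]
  have hdij : d i j = ‖c i - c j‖ := by rw [hd]
  rw [← hdij]; ring
end
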